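/- arXiv:2306.03865 — 6 statements merged into one kernel-verified Lean document; each statement's English description precedes it below -/
import Mathlib

section
/- Let n ≥ 2 and let g₀, g₁, v ∈ ℝⁿ with g₁ ≠ 0. Let P : ℝⁿ → ℝⁿ denote the orthogonal projection onto the orthogonal complement of span{g₁}, and assume P g₀ ≠ 0. Set τ₁⋆ := ⟨P g₀, v⟩ / ‖P g₀‖². Then there exist τ₁ ∈ ℝ and τ₂ ≥ 0 such that v = (g₀ + g₁)τ₁ + 2 g₁ τ₂ if and only if P v = τ₁⋆ · P g₀ and ⟨g₁, v⟩ − ⟨g₁, g₀ + g₁⟩ · τ₁⋆ ≥ 0; moreover, when a solution exists, necessarily τ₁ = τ₁⋆. -/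
open scoped RealInnerProductSpace

/-- Solvability characterization of `v = (g₀+g₁)τ₁ + 2g₁τ₂` with `τ₂ ≥ 0`,
where `P` is the orthogonal projection onto `(span{g₁})ᗮ` and
`τ₁⋆ = ⟨Pg₀, v⟩/‖Pg₀‖²`; moreover any solution has `τ₁ = τ₁⋆`. -/
theorem stmt_2 (n : ℕ) (hn : 2 ≤ n)
    (g₀ g₁ v : EuclideanSpace ℝ (Fin n)) (hg₁ : g₁ ≠ 0)
    (K : Submodule ℝ (EuclideanSpace ℝ (Fin n))) (hK : K = (ℝ ∙ g₁)ᗮ)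
    (Pg₀ Pv : EuclideanSpace ℝ (Fin n))
    (hPg₀ : Pg₀ = (K.orthogonalProjectionOnto g₀ : EuclideanSpace ℝ (Fin n)))
    (hPv : Pv = (K.orthogonalProjectionOnto v : EuclideanSpace ℝ (Fin n)))
    (hP : Pg₀ ≠ 0)
    (τ₁s : ℝ) (hτ : τ₁s = ⟪Pg₀, v⟫ / ‖Pg₀‖ ^ 2) :
    ((∃ τ₁ τ₂ : ℝ, 0 ≤ τ₂ ∧ v = τ₁ • (g₀ + g₁) + (2 * τ₂) • g₁) ↔
      (Pv = τ₁s • Pg₀ ∧ 0 ≤ ⟪g₁, v⟫ - ⟪g₁, g₀ + g₁⟫ * τ₁s)) ∧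
      ∀ τ₁ τ₂ : ℝ, 0 ≤ τ₂ → v = τ₁ • (g₀ + g₁) + (2 * τ₂) • g₁ → τ₁ = τ₁s := by
  subst hK
  have hg₁n : (0:ℝ) < ‖g₁‖ ^ 2 := pow_pos (norm_pos_iff.mpr hg₁) 2
  have hne : ‖g₁‖ ^ 2 ≠ 0 := ne_of_gt hg₁n
  set K : Submodule ℝ (EuclideanSpace ℝ (Fin n)) := (ℝ ∙ g₁)ᗮ with hK
  have hKorth : Kᗮ = (ℝ ∙ g₁) := Submodule.orthogonal_orthogonal _
  -- decomposition of any w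
  have hdec : ∀ w : EuclideanSpace ℝ (Fin n),
      w = (K.orthogonalProjectionOnto w : EuclideanSpace ℝ (Fin n)) + (⟪g₁, w⟫ / ‖g₁‖ ^ 2) • g₁ := by
    intro w
    have h := Submodule.starProjection_add_starProjection_orthogonal (K := K) w
    rw [Submodule.starProjection_apply, Submodule.starProjection_apply] at h
    have h2 : (Kᗮ.orthogonalProjectionOnto w : EuclideanSpace ℝ (Fin n))
        = (⟪g₁, w⟫ / ‖g₁‖ ^ 2) • g₁ := by
      have hgen : ∀ (U : Submodule ℝ (EuclideanSpace ℝ (Fin n))) [U.HasOrthogonalProjection],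
          U = (ℝ ∙ g₁) → U.starProjection w = (⟪g₁, w⟫ / ‖g₁‖ ^ 2) • g₁ := by
        intro U _ hU
        subst hU
        rw [Submodule.starProjection_singleton]
        norm_num
      rw [Submodule.coe_orthogonalProjectionOnto_apply]
      exact hgen _ hKorth
    conv_lhs => rw [← h]
    rw [h2]
  have hPg₁ : (K.orthogonalProjectionOnto g₁ : EuclideanSpace ℝ (Fin n)) = 0 := by
    have hmem' : g₁ ∈ Kᗮ := by rw [hKorth]; exact Submodule.mem_span_singleton_self g₁
    rw [Submodule.orthogonalProjectionOnto_apply_of_mem_orthogonal hmem']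
    rfl
  -- Pg₀ ⊥ g₁ and Pv ⊥ g₁
  have hmem : ∀ w : EuclideanSpace ℝ (Fin n),
      ⟪g₁, (K.orthogonalProjectionOnto w : EuclideanSpace ℝ (Fin n))⟫ = 0 := by
    intro w
    have hm : (K.orthogonalProjectionOnto w : EuclideanSpace ℝ (Fin n)) ∈ (ℝ ∙ g₁)ᗮ :=
      (K.orthogonalProjectionOnto w).2
    exact (Submodule.mem_orthogonal _ _).1 hm g₁ (Submodule.mem_span_singleton_self g₁)
  have hPg₀g₁ : ⟪g₁, Pg₀⟫ = 0 := by rw [hPg₀]; exact hmem g₀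
  have hPg₀g₁' : ⟪Pg₀, g₁⟫ = 0 := by rw [real_inner_comm]; exact hPg₀g₁
  have hPvg₁ : ⟪g₁, Pv⟫ = 0 := by rw [hPv]; exact hmem v
  have hPn : (0:ℝ) < ‖Pg₀‖ ^ 2 := pow_pos (norm_pos_iff.mpr hP) 2
  have hPg₀g₀ : ⟪Pg₀, g₀⟫ = ‖Pg₀‖ ^ 2 := by
    conv_lhs => rw [hdec g₀, ← hPg₀]
    rw [inner_add_right, inner_smul_right, hPg₀g₁', real_inner_self_eq_norm_sq]
    ring
  have hPg₀v : ⟪Pg₀, v⟫ = ⟪Pg₀, Pv⟫ := by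
    conv_lhs => rw [hdec v, ← hPv]
    rw [inner_add_right, inner_smul_right, hPg₀g₁']
    ring
  have hgg : ⟪g₁, g₀ + g₁⟫ = ⟪g₁, g₀⟫ + ‖g₁‖ ^ 2 := by
    rw [inner_add_right, real_inner_self_eq_norm_sq]
  -- moreover clause
  have huniq : ∀ τ₁ τ₂ : ℝ, 0 ≤ τ₂ → v = τ₁ • (g₀ + g₁) + (2 * τ₂) • g₁ → τ₁ = τ₁s := by
    intro τ₁ τ₂ _ heq
    have h1 : ⟪Pg₀, v⟫ = τ₁ * ‖Pg₀‖ ^ 2 := by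
      rw [heq, inner_add_right, inner_smul_right, inner_smul_right, inner_add_right,
        hPg₀g₁', hPg₀g₀]
      ring
    rw [hτ, h1]
    field_simp
  refine ⟨⟨?_, ?_⟩, huniq⟩
  · rintro ⟨τ₁, τ₂, hτ₂, heq⟩
    have hτ₁ : τ₁ = τ₁s := huniq τ₁ τ₂ hτ₂ heq
    subst hτ₁
    constructor
    · rw [hPv, heq]
      push_cast [map_add, map_smul]
      rw [hPg₁, ← hPg₀]
      simp
    · have h2 : ⟪g₁, v⟫ = τ₁ * ⟪g₁, g₀ + g₁⟫ + 2 * τ₂ * ‖g₁‖ ^ 2 := by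
        rw [heq, inner_add_right, inner_smul_right, inner_smul_right,
          real_inner_self_eq_norm_sq]
      rw [h2]
      nlinarith
  · rintro ⟨h1, h2⟩
    set c₂ : ℝ := (⟪g₁, v⟫ - ⟪g₁, g₀ + g₁⟫ * τ₁s) / (2 * ‖g₁‖ ^ 2) with hc₂
    have hc₂0 : 0 ≤ c₂ := div_nonneg h2 (by positivity)
    refine ⟨τ₁s, c₂, hc₂0, ?_⟩
    have hv' := hdec v
    have hg₀' := hdec g₀
    rw [← hPv] at hv'
    rw [← hPg₀] at hg₀'
    conv_lhs => rw [hv', h1]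
    conv_rhs => rw [hg₀']
    match_scalars
    · ring
    · rw [hc₂, hgg]
      field_simp
      ring
end

section
/- Let n ≥ 1, q⋆ ∈ ℝⁿ, γ ≥ 0 and α₂ > n γ, and define U_d(q) = −γ cos(qΣ − qΣ⋆) + (α₂/2)‖q − q⋆‖² with qΣ := Σᵢ qᵢ, qΣ⋆ := Σᵢ q⋆ᵢ. Then U_d is twice differentiable and at every q ∈ ℝⁿ its Hessian equals γ cos(qΣ − qΣ⋆)·𝟙_{n×n} + α₂·Iₙ, which is a positive definite matrix for every q ∈ ℝⁿ. Consequently U_d is strictly convex on ℝⁿ. -/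
open Real Set Matrix InnerProductSpace

private lemma my_convexOn_sum {E : Type*} [AddCommGroup E] [Module ℝ E] {ι : Type*} (t : Finset ι)
    (f : ι → E → ℝ) (h : ∀ i ∈ t, ConvexOn ℝ Set.univ (f i)) :
    ConvexOn ℝ Set.univ (fun x => ∑ i ∈ t, f i x) := by
  induction t using Finset.cons_induction with
  | empty => simpa using convexOn_const (0 : ℝ) convex_univ
  | cons i t hit ih =>
    simp_rw [Finset.sum_cons]
    exact (h i (Finset.mem_cons_self _ _)).add (ih fun j hj => h j (Finset.mem_cons.2 (Or.inr hj)))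

private lemma my_comp {n : ℕ} {f : ℝ → ℝ} (hf : ConvexOn ℝ Set.univ f)
    {ℓ : EuclideanSpace ℝ (Fin n) → ℝ}
    (hℓ : ∀ (a b : ℝ) (x y : EuclideanSpace ℝ (Fin n)), a + b = 1 →
      ℓ (a • x + b • y) = a * ℓ x + b * ℓ y) :
    ConvexOn ℝ Set.univ (fun q => f (ℓ q)) := by
  refine ⟨convex_univ, fun x _ y _ a b ha hb hab => ?_⟩
  have := hf.2 (Set.mem_univ (ℓ x)) (Set.mem_univ (ℓ y)) ha hb hab
  simpa [hℓ a b x y hab, smul_eq_mul] using this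

private lemma my_pair_sq {n : ℕ} (x : Fin n → ℝ) :
    ∑ i, ∑ j, (x i - x j) ^ 2
      = 2 * n * (∑ i, x i ^ 2) - 2 * (∑ i, x i) ^ 2 := by
  have h : ∀ i, ∑ j, (x i - x j) ^ 2
      = (n : ℝ) * x i ^ 2 - 2 * x i * (∑ j, x j) + (∑ j, x j ^ 2) := by
    intro i
    simp only [sub_sq]
    rw [Finset.sum_add_distrib, Finset.sum_sub_distrib, Finset.sum_const, Finset.card_univ,
      Fintype.card_fin, ← Finset.mul_sum]
    ring
  rw [Finset.sum_congr rfl fun i _ => h i]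
  simp only [Finset.sum_add_distrib, Finset.sum_sub_distrib, ← Finset.mul_sum, ← Finset.sum_mul,
    Finset.sum_const, Finset.card_univ, Fintype.card_fin, nsmul_eq_mul]
  ring

private lemma my_phi_convex (γ : ℝ) (hγ : 0 ≤ γ) :
    ConvexOn ℝ Set.univ (fun t : ℝ => -γ * Real.cos t + γ / 2 * t ^ 2) := by
  set φ : ℝ → ℝ := fun t => -γ * Real.cos t + γ / 2 * t ^ 2 with hφdef
  have hd1 : ∀ t, HasDerivAt φ (γ * Real.sin t + γ * t) t := by
    intro t
    have h := ((Real.hasDerivAt_cos t).const_mul (-γ)).add ((hasDerivAt_pow 2 t).const_mul (γ / 2))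
    refine h.congr_deriv ?_
    ring
  have hderiv : deriv φ = fun t => γ * Real.sin t + γ * t := funext fun t => (hd1 t).deriv
  have hd2 : ∀ t, HasDerivAt (deriv φ) (γ * Real.cos t + γ) t := by
    intro t
    rw [hderiv]
    have h := ((Real.hasDerivAt_sin t).const_mul γ).add ((hasDerivAt_id t).const_mul γ)
    refine h.congr_deriv ?_
    ring
  refine convexOn_of_deriv2_nonneg convex_univ ?_ ?_ ?_ ?_
  · exact Continuous.continuousOn (by continuity)
  · exact fun t _ => (hd1 t).differentiableAt.differentiableWithinAt
  · exact fun t _ => (hd2 t).differentiableAt.differentiableWithinAt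
  · intro t _
    show 0 ≤ deriv^[2] φ t
    have h2 : deriv^[2] φ t = deriv (deriv φ) t := by
      simp [Function.iterate_succ, Function.iterate_one]
    rw [h2, (hd2 t).deriv]
    nlinarith [Real.neg_one_le_cos t]

set_option maxHeartbeats 1000000 in
/-- For `γ ≥ 0` and `α₂ > nγ`, the shaped potential
`U_d(q) = −γ cos(qΣ − qΣ⋆) + (α₂/2)‖q − q⋆‖²` is twice differentiable, its Hessian at
every `q` equals `γ cos(qΣ − qΣ⋆)·𝟙_{n×n} + α₂·Iₙ`, this matrix is positive definite
for every `q`, and consequently `U_d` is strictly convex on ℝⁿ. -/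
theorem stmt_8 (n : ℕ) (hn : 1 ≤ n) (qs : EuclideanSpace ℝ (Fin n))
    (γ α₂ : ℝ) (hγ : 0 ≤ γ) (hα : (n : ℝ) * γ < α₂)
    (Ud : EuclideanSpace ℝ (Fin n) → ℝ)
    (hUd : ∀ q : EuclideanSpace ℝ (Fin n),
      Ud q = -γ * Real.cos ((∑ i, q i) - (∑ i, qs i)) + (α₂ / 2) * ‖q - qs‖ ^ 2) :
    ContDiff ℝ 2 Ud ∧
      (∀ q v : EuclideanSpace ℝ (Fin n),
        fderiv ℝ (gradient Ud) q v =
          (WithLp.toLp 2 (fun i => γ * Real.cos ((∑ j, q j) - (∑ j, qs j)) * (∑ j, v j) + α₂ * v i) :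
            EuclideanSpace ℝ (Fin n))) ∧
      (∀ q : EuclideanSpace ℝ (Fin n),
        ((γ * Real.cos ((∑ j, q j) - (∑ j, qs j))) • Matrix.of (fun _ _ => (1 : ℝ)) +
            α₂ • (1 : Matrix (Fin n) (Fin n) ℝ)).PosDef) ∧
      StrictConvexOn ℝ Set.univ Ud := by
  classical
  set c : ℝ := ∑ i, qs i with hc
  set L : EuclideanSpace ℝ (Fin n) →L[ℝ] ℝ := ∑ i, EuclideanSpace.proj i with hLdef
  have hL : ∀ q : EuclideanSpace ℝ (Fin n), L q = ∑ i, q i := by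
    intro q; simp [hLdef, ContinuousLinearMap.sum_apply]
  have hUdf : Ud = fun q => -γ * Real.cos (L q - c) + (α₂ / 2) * ‖q - qs‖ ^ 2 := by
    funext q; rw [hUd q, hL]
  -- Part 1 : smoothness
  have hsmooth : ContDiff ℝ 2 Ud := by
    rw [hUdf]
    exact (contDiff_const.mul (Real.contDiff_cos.comp ((L.contDiff).sub contDiff_const))).add
      (contDiff_const.mul ((contDiff_id.sub contDiff_const).norm_sq (𝕜 := ℝ)))
  refine ⟨hsmooth, ?_, ?_, ?_⟩
  -- Part 2 : the Hessian (as the derivative of the gradient)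
  · set ones : EuclideanSpace ℝ (Fin n) := WithLp.toLp 2 (fun _ => 1) with hones
    set G : EuclideanSpace ℝ (Fin n) → EuclideanSpace ℝ (Fin n) :=
      fun q => (γ * Real.sin (L q - c)) • ones + α₂ • (q - qs) with hGdef
    have hgrad : gradient Ud = G := by
      funext q
      have D1 : HasFDerivAt (fun p : EuclideanSpace ℝ (Fin n) => Real.cos (L p - c))
          ((-Real.sin (L q - c)) • (L : EuclideanSpace ℝ (Fin n) →L[ℝ] ℝ)) q := by
        have := (Real.hasDerivAt_cos (L q - c)).comp_hasFDerivAt q ((L.hasFDerivAt).sub_const c)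
        exact this
      have D2 : HasFDerivAt (fun p : EuclideanSpace ℝ (Fin n) => ‖p - qs‖ ^ 2)
          (2 • (innerSL ℝ (q - qs)).comp (ContinuousLinearMap.id ℝ _)) q :=
        ((hasFDerivAt_id q).sub_const qs).norm_sq
      have hF : HasFDerivAt Ud
          ((-γ) • ((-Real.sin (L q - c)) • L) +
            (α₂ / 2) • (2 • (innerSL ℝ (q - qs)).comp (ContinuousLinearMap.id ℝ _))) q := by
        rw [hUdf]
        exact (D1.const_mul (-γ)).add (D2.const_mul (α₂ / 2))
      have hEq : ((-γ) • ((-Real.sin (L q - c)) • L) +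
            (α₂ / 2) • (2 • (innerSL ℝ (q - qs)).comp (ContinuousLinearMap.id ℝ _)))
          = toDual ℝ (EuclideanSpace ℝ (Fin n)) (G q) := by
        ext v
        simp only [ContinuousLinearMap.add_apply, ContinuousLinearMap.smul_apply,
          ContinuousLinearMap.comp_apply, ContinuousLinearMap.id_apply, innerSL_apply_apply,
          toDual_apply_apply, smul_eq_mul, hGdef]
        simp only [PiLp.inner_apply, RCLike.inner_apply, starRingEnd_apply, star_trivial,
          PiLp.add_apply, PiLp.smul_apply, PiLp.sub_apply, hones, PiLp.toLp_apply, smul_eq_mul, mul_one]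
        rw [hL]
        simp only [add_mul, mul_assoc, Finset.sum_add_distrib, ← Finset.mul_sum, nsmul_eq_mul]
        rw [hL v]
        push_cast
        simp only [Finset.mul_sum, ← Finset.sum_add_distrib]
        refine Finset.sum_congr rfl fun x _ => ?_
        ring
      have : HasGradientAt Ud (G q) q := by
        rw [hasGradientAt_iff_hasFDerivAt, ← hEq]
        exact hF
      exact this.gradient
    intro q v
    rw [hgrad]
    have hs : HasFDerivAt (fun p : EuclideanSpace ℝ (Fin n) => γ * Real.sin (L p - c))
        ((γ * Real.cos (L q - c)) • L) q := by
      have h0 := (Real.hasDerivAt_sin (L q - c)).comp_hasFDerivAt q ((L.hasFDerivAt).sub_const c)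
      have := h0.const_mul γ
      simpa [smul_smul] using this
    have hG : HasFDerivAt G
        (((γ * Real.cos (L q - c)) • L).smulRight ones + α₂ • ContinuousLinearMap.id ℝ _) q := by
      rw [hGdef]
      exact (hs.smul_const ones).add (((hasFDerivAt_id q).sub_const qs).const_smul α₂)
    rw [hG.fderiv]
    ext i
    simp only [ContinuousLinearMap.add_apply, ContinuousLinearMap.smulRight_apply,
      ContinuousLinearMap.smul_apply, ContinuousLinearMap.id_apply, PiLp.add_apply,
      PiLp.smul_apply, hones, PiLp.toLp_apply, smul_eq_mul, mul_one, hL]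
  -- Part 3 : positive definiteness of the Hessian matrix
  · intro q
    set cθ : ℝ := γ * Real.cos ((∑ j, q j) - c) with hcθ
    refine Matrix.PosDef.of_dotProduct_mulVec_pos ?_ ?_
    · ext i j
      by_cases h : i = j <;>
        simp [Matrix.conjTranspose_apply, Matrix.add_apply, Matrix.smul_apply, Matrix.one_apply,
          h, eq_comm]
    · intro x hx
      have hmv : ∀ j, ((cθ • Matrix.of (fun _ _ => (1 : ℝ)) +
          α₂ • (1 : Matrix (Fin n) (Fin n) ℝ)) *ᵥ x) j = cθ * (∑ k, x k) + α₂ * x j := by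
        intro j
        simp [Matrix.mulVec, dotProduct, Matrix.add_apply, Matrix.smul_apply,
          Matrix.one_apply, add_mul, Finset.sum_add_distrib, Finset.mul_sum, ite_mul,
          Finset.sum_ite_eq]
      have hdot : star x ⬝ᵥ ((cθ • Matrix.of (fun _ _ => (1 : ℝ)) +
          α₂ • (1 : Matrix (Fin n) (Fin n) ℝ)) *ᵥ x)
          = cθ * (∑ k, x k) ^ 2 + α₂ * (∑ k, x k ^ 2) := by
        simp only [dotProduct, Pi.star_apply, star_trivial]
        rw [Finset.sum_congr rfl fun j _ => by rw [hmv j]]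
        rw [Finset.sum_congr rfl fun j _ =>
          (by ring : x j * (cθ * (∑ k, x k) + α₂ * x j) = cθ * (∑ k, x k) * x j + α₂ * x j ^ 2)]
        rw [Finset.sum_add_distrib, ← Finset.mul_sum, ← Finset.mul_sum]
        ring
      rw [hdot]
      have hS : (∑ k, x k) ^ 2 ≤ (n : ℝ) * ∑ k, x k ^ 2 := by
        have := sq_sum_le_card_mul_sum_sq (s := (Finset.univ : Finset (Fin n))) (f := x)
        simpa using this
      have hT : 0 < ∑ k, x k ^ 2 := by
        obtain ⟨j, hj⟩ := Function.ne_iff.1 hx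
        have h1 : x j ^ 2 ≤ ∑ k, x k ^ 2 :=
          Finset.single_le_sum (fun i _ => sq_nonneg (x i)) (Finset.mem_univ j)
        nlinarith [sq_pos_of_ne_zero hj]
      have hcos : -1 ≤ Real.cos ((∑ j, q j) - c) := Real.neg_one_le_cos _
      nlinarith [mul_nonneg (mul_nonneg hγ
          (by linarith : (0:ℝ) ≤ Real.cos ((∑ j, q j) - c) + 1)) (sq_nonneg (∑ k, x k)),
        mul_pos (sub_pos.2 hα) hT, mul_le_mul_of_nonneg_left hS hγ]
  -- Part 4 : strict convexity
  · set m : ℝ := α₂ - n * γ with hm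
    have hm0 : 0 < m := by simp [hm]; linarith
    have hnorm : ∀ x : EuclideanSpace ℝ (Fin n), ‖x‖ ^ 2 = ∑ i, x i ^ 2 := by
      intro x
      rw [EuclideanSpace.norm_eq, Real.sq_sqrt (by positivity)]
      simp [sq_abs]
    have hT1 : ConvexOn ℝ Set.univ
        (fun q : EuclideanSpace ℝ (Fin n) =>
          -γ * Real.cos ((∑ i, q i) - c) + γ / 2 * ((∑ i, q i) - c) ^ 2) := by
      refine my_comp (my_phi_convex γ hγ) ?_
      intro a b x y hab
      have hsum : ∑ i, (a • x + b • y) i = a * ∑ i, x i + b * ∑ i, y i := by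
        simp only [PiLp.add_apply, PiLp.smul_apply, smul_eq_mul]
        rw [Finset.sum_add_distrib, ← Finset.mul_sum, ← Finset.mul_sum]
      rw [hsum]
      linear_combination c * hab
    have hT2 : ConvexOn ℝ Set.univ
        (fun q : EuclideanSpace ℝ (Fin n) => γ / 4 * ∑ i, ∑ j, (q i - q j) ^ 2) := by
      refine ConvexOn.smul (by positivity) ?_
      refine my_convexOn_sum _ _ fun i _ => ?_
      refine my_convexOn_sum _ _ fun j _ => ?_
      refine my_comp (even_two.convexOn_pow) ?_
      intro a b x y hab
      simp only [PiLp.add_apply, PiLp.smul_apply, smul_eq_mul]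
      ring
    have hT3 : ConvexOn ℝ Set.univ
        (fun q : EuclideanSpace ℝ (Fin n) =>
          (-α₂ * (∑ i, q i * qs i) + γ * c * (∑ i, q i)) +
            (α₂ / 2 * (∑ i, qs i ^ 2) - γ / 2 * c ^ 2)) := by
      set C : ℝ := α₂ / 2 * (∑ i, qs i ^ 2) - γ / 2 * c ^ 2 with hC
      refine my_comp (f := fun t => t + C)
        ⟨convex_univ, fun s _ u _ a b ha hb hab => ?_⟩ ?_
      · simp only [smul_eq_mul]
        have : a * C + b * C = C := by rw [← add_mul, hab, one_mul]
        linarith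
      · intro a b x y hab
        simp only [PiLp.add_apply, PiLp.smul_apply, smul_eq_mul]
        rw [Finset.sum_congr rfl fun i (_ : i ∈ Finset.univ) =>
          (by ring : (a * x i + b * y i) * qs i = a * (x i * qs i) + b * (y i * qs i))]
        rw [Finset.sum_add_distrib, ← Finset.mul_sum, ← Finset.mul_sum,
          Finset.sum_add_distrib, ← Finset.mul_sum, ← Finset.mul_sum]
        ring
    have hconv : ConvexOn ℝ Set.univ (fun x => Ud x - m / 2 * ‖x‖ ^ 2) := by
      have hkey : (fun x => Ud x - m / 2 * ‖x‖ ^ 2)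
          = fun q : EuclideanSpace ℝ (Fin n) =>
            (-γ * Real.cos ((∑ i, q i) - c) + γ / 2 * ((∑ i, q i) - c) ^ 2)
            + γ / 4 * ∑ i, ∑ j, (q i - q j) ^ 2
            + ((-α₂ * (∑ i, q i * qs i) + γ * c * (∑ i, q i)) +
                (α₂ / 2 * (∑ i, qs i ^ 2) - γ / 2 * c ^ 2)) := by
        funext q
        have hsub : ‖q - qs‖ ^ 2
            = (∑ i, q i ^ 2) - 2 * (∑ i, q i * qs i) + (∑ i, qs i ^ 2) := by
          rw [hnorm (q - qs)]
          rw [Finset.sum_congr rfl fun i (_ : i ∈ Finset.univ) =>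
            (by rw [PiLp.sub_apply]; ring :
              ((q - qs) i) ^ 2 = q i ^ 2 - 2 * (q i * qs i) + qs i ^ 2)]
          rw [Finset.sum_add_distrib, Finset.sum_sub_distrib, ← Finset.mul_sum]
        rw [hUd q, hsub, hnorm q, my_pair_sq (fun i => q i)]
        ring
      rw [hkey]
      exact (hT1.add hT2).add hT3
    have hstrong : StrongConvexOn Set.univ m Ud := strongConvexOn_iff_convex.mpr hconv
    exact hstrong.strictConvexOn hm0
end

section
/- Let n ≥ 1, α₁, α₂, γ, θ ∈ ℝ and set q⋆ := θ·𝟙ₙ ∈ ℝⁿ. Define U(q) = α₁(1 − cos(qΣ)) + (α₂/2)‖q‖² and U_d(q) = −γ cos(qΣ − nθ) + (α₂/2)‖q − q⋆‖², where qΣ := Σᵢ qᵢ. Then for every q ∈ ℝⁿ, ∇U(q) − ∇U_d(q) = (α₁ sin(qΣ) − γ sin(qΣ − nθ) + α₂ θ)·𝟙ₙ; in particular ∇U(q) − ∇U_d(q) lies in the span of 𝟙ₙ for every q, i.e., all its components are equal. -/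
noncomputable section GradAux

def ones (n : ℕ) : EuclideanSpace ℝ (Fin n) := WithLp.toLp 2 (fun _ => 1)

lemma inner_ones {n : ℕ} (q : EuclideanSpace ℝ (Fin n)) :
    (inner ℝ (ones n) q : ℝ) = ∑ i, q i := by
  simp [PiLp.inner_apply, RCLike.inner_apply, ones]

lemma grad_helper {n : ℕ} (a b d : ℝ) (c p : EuclideanSpace ℝ (Fin n)) :
    HasGradientAt (fun q : EuclideanSpace ℝ (Fin n) =>
        a * Real.cos ((∑ i, q i) + b) + (d/2) * ‖q - c‖^2)
      ((-(a * Real.sin ((∑ i, p i) + b))) • ones n + d • (p - c)) p := by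
  rw [hasGradientAt_iff_hasFDerivAt]
  have h1 : HasFDerivAt (fun q : EuclideanSpace ℝ (Fin n) => (∑ i, q i) + b)
      (innerSL ℝ (ones n)) p := by
    have := ((innerSL ℝ (ones n)).hasFDerivAt (x := p)).add_const b
    refine this.congr_of_eventuallyEq (Filter.Eventually.of_forall fun q => ?_)
    simp [inner_ones, ones, PiLp.inner_apply, RCLike.inner_apply]
  have h2 : HasFDerivAt (fun q : EuclideanSpace ℝ (Fin n) => Real.cos ((∑ i, q i) + b))
      ((-Real.sin ((∑ i, p i) + b)) • (innerSL ℝ (ones n))) p := by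
    have := (Real.hasDerivAt_cos ((∑ i, p i) + b)).comp_hasFDerivAt p h1; exact this
  have h3 : HasFDerivAt (fun q : EuclideanSpace ℝ (Fin n) => ‖q - c‖^2)
      (2 • (innerSL ℝ (p - c))) p := by
    have hid : HasFDerivAt (fun q : EuclideanSpace ℝ (Fin n) => q - c)
        (ContinuousLinearMap.id ℝ (EuclideanSpace ℝ (Fin n))) p :=
      (hasFDerivAt_id p).sub_const c
    simpa using hid.norm_sq
  have h4 := (h2.const_mul a).add (h3.const_mul (d/2))
  refine h4.congr_fderiv ?_
  ext y
  simp [InnerProductSpace.toDual_apply_apply, inner_add_left, real_inner_smul_left,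
    inner_ones, ContinuousLinearMap.smul_apply]
  ring

lemma HasGradientAt.add_const' {n : ℕ} {f : EuclideanSpace ℝ (Fin n) → ℝ}
    {g x : EuclideanSpace ℝ (Fin n)} (h : HasGradientAt f g x) (k : ℝ) :
    HasGradientAt (fun y => f y + k) g x := by
  rw [hasGradientAt_iff_hasFDerivAt] at *
  exact h.add_const k

end GradAux

/-- Matching equation of potential energy shaping: for the homogeneous
target `q⋆ = θ·𝟙ₙ`, the difference `∇U(q) − ∇U_d(q)` equals
`(α₁ sin(qΣ) − γ sin(qΣ − nθ) + α₂θ)·𝟙ₙ`; in particular it lies in the span of `𝟙ₙ`,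
i.e. all its components are equal. -/
theorem stmt_10 (n : ℕ) (hn : 1 ≤ n) (α₁ α₂ γ θ : ℝ)
    (qs : EuclideanSpace ℝ (Fin n)) (hqs : qs = WithLp.toLp 2 (fun _ => θ))
    (U Ud : EuclideanSpace ℝ (Fin n) → ℝ)
    (hU : ∀ q : EuclideanSpace ℝ (Fin n),
      U q = α₁ * (1 - Real.cos (∑ i, q i)) + (α₂ / 2) * ‖q‖ ^ 2)
    (hUd : ∀ q : EuclideanSpace ℝ (Fin n),
      Ud q = -γ * Real.cos ((∑ i, q i) - (n : ℝ) * θ) + (α₂ / 2) * ‖q - qs‖ ^ 2) :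
    (∀ q : EuclideanSpace ℝ (Fin n),
      gradient U q - gradient Ud q =
        (α₁ * Real.sin (∑ i, q i) - γ * Real.sin ((∑ i, q i) - (n : ℝ) * θ) + α₂ * θ) •
          (WithLp.toLp 2 (fun _ => (1 : ℝ)) : EuclideanSpace ℝ (Fin n))) ∧
    ∀ (q : EuclideanSpace ℝ (Fin n)) (i j : Fin n),
      (gradient U q - gradient Ud q) i = (gradient U q - gradient Ud q) j := by
  
  have hU' : U = fun q => ((-α₁) * Real.cos ((∑ i, q i) + 0) +
      (α₂/2) * ‖q - 0‖^2) + α₁ := by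
    funext q; rw [hU q]; rw [add_zero, sub_zero]; ring
  have hUd' : Ud = fun q => (-γ) * Real.cos ((∑ i, q i) + (-((n:ℝ) * θ))) +
      (α₂/2) * ‖q - qs‖^2 := by
    funext q; rw [hUd q]; ring_nf
  have key : ∀ q : EuclideanSpace ℝ (Fin n),
      gradient U q - gradient Ud q =
        (α₁ * Real.sin (∑ i, q i) - γ * Real.sin ((∑ i, q i) - (n : ℝ) * θ) + α₂ * θ) •
          (WithLp.toLp 2 (fun _ => (1 : ℝ)) : EuclideanSpace ℝ (Fin n)) := by
    intro q
    have hgU : gradient U q =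
        (-((-α₁) * Real.sin ((∑ i, q i) + 0))) • ones n + α₂ • (q - 0) := by
      rw [hU']
      exact ((grad_helper (-α₁) 0 α₂ 0 q).add_const' α₁).gradient
    have hgUd : gradient Ud q =
        (-((-γ) * Real.sin ((∑ i, q i) + (-((n:ℝ) * θ))))) • ones n + α₂ • (q - qs) := by
      rw [hUd']
      exact (grad_helper (-γ) (-((n:ℝ) * θ)) α₂ qs q).gradient
    rw [hgU, hgUd]
    ext i
    simp [ones, hqs, sub_eq_add_neg]
    ring
  exact ⟨key, fun q i j => by rw [key q]; simp⟩
end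

section
/- Let n ≥ 1, q⋆ ∈ ℝⁿ, γ ≥ 0 and α₂ > n γ, and define φ : ℝⁿ → ℝⁿ by φ(q) = γ sin(qΣ − qΣ⋆)·𝟙ₙ + α₂(q − q⋆), where qΣ := Σᵢ qᵢ and qΣ⋆ := Σᵢ q⋆ᵢ. Then φ is injective on ℝⁿ. -/
/-- For `γ ≥ 0` and `α₂ > nγ`, the map
`φ(q) = γ sin(qΣ − qΣ⋆)·𝟙ₙ + α₂(q − q⋆)` is injective on ℝⁿ. -/
theorem stmt_11 (n : ℕ) (hn : 1 ≤ n) (qs : EuclideanSpace ℝ (Fin n))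
    (γ α₂ : ℝ) (hγ : 0 ≤ γ) (hα : (n : ℝ) * γ < α₂)
    (one : EuclideanSpace ℝ (Fin n)) (hone : one = WithLp.toLp 2 (fun _ => 1))
    (φ : EuclideanSpace ℝ (Fin n) → EuclideanSpace ℝ (Fin n))
    (hφ : ∀ q : EuclideanSpace ℝ (Fin n),
      φ q = (γ * Real.sin ((∑ i, q i) - (∑ i, qs i))) • one + α₂ • (q - qs)) :
    Function.Injective φ := by
  have hnγ : 0 ≤ (n : ℝ) * γ := by positivity
  have hα0 : 0 < α₂ := lt_of_le_of_lt hnγ hα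
  intro a b hab
  rw [hφ, hφ] at hab
  set s : ℝ := (∑ i, a i) - (∑ i, qs i) with hs
  set t : ℝ := (∑ i, b i) - (∑ i, qs i) with ht
  have hcomp : ∀ i, γ * Real.sin s + α₂ * (a i - qs i)
      = γ * Real.sin t + α₂ * (b i - qs i) := by
    intro i
    have := congrArg (fun v => v i) hab
    simpa [hone, PiLp.add_apply, PiLp.smul_apply, PiLp.sub_apply, smul_eq_mul] using this
  have hkey : ∀ i, α₂ * (a i - b i) = γ * (Real.sin t - Real.sin s) := by
    intro i
    linear_combination hcomp i
  have hsum : α₂ * ((∑ i, a i) - (∑ i, b i)) = (n : ℝ) * (γ * (Real.sin t - Real.sin s)) := by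
    calc α₂ * ((∑ i, a i) - (∑ i, b i)) = ∑ i : Fin n, α₂ * (a i - b i) := by
          rw [← Finset.sum_sub_distrib, Finset.mul_sum]
      _ = ∑ _i : Fin n, γ * (Real.sin t - Real.sin s) :=
          Finset.sum_congr rfl fun i _ => hkey i
      _ = (n : ℝ) * (γ * (Real.sin t - Real.sin s)) := by
          simp [Finset.sum_const, nsmul_eq_mul]
  have hst : s - t = (∑ i, a i) - (∑ i, b i) := by rw [hs, ht]; ring
  have hsin : |Real.sin t - Real.sin s| ≤ |t - s| := by
    rw [Real.sin_sub_sin]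
    calc |2 * Real.sin ((t - s) / 2) * Real.cos ((t + s) / 2)|
        = 2 * |Real.sin ((t - s) / 2)| * |Real.cos ((t + s) / 2)| := by
          rw [abs_mul, abs_mul, abs_two]
      _ ≤ 2 * |(t - s) / 2| * 1 := by
          apply mul_le_mul ?_ (Real.abs_cos_le_one _) (abs_nonneg _) (by positivity)
          exact mul_le_mul_of_nonneg_left Real.abs_sin_le_abs (by norm_num)
      _ = |t - s| := by rw [abs_div, abs_two]; ring
  have hstz : s = t := by
    by_contra hne
    have habs : α₂ * |s - t| ≤ (n : ℝ) * γ * |s - t| := by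
      have h1 : |α₂ * (s - t)| = |(n : ℝ) * (γ * (Real.sin t - Real.sin s))| := by
        rw [← hst] at hsum; rw [hsum]
      calc α₂ * |s - t| = |α₂ * (s - t)| := by
            rw [abs_mul, abs_of_pos hα0]
        _ = (n : ℝ) * (γ * |Real.sin t - Real.sin s|) := by
            rw [h1, abs_mul, abs_mul, abs_of_nonneg (Nat.cast_nonneg n), abs_of_nonneg hγ]
        _ ≤ (n : ℝ) * (γ * |t - s|) := by
            apply mul_le_mul_of_nonneg_left _ (Nat.cast_nonneg n)
            exact mul_le_mul_of_nonneg_left hsin hγ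
        _ = (n : ℝ) * γ * |s - t| := by rw [abs_sub_comm]; ring
    have hpos : 0 < |s - t| := abs_pos.mpr (sub_ne_zero.mpr hne)
    nlinarith
  have : ∀ i, a i = b i := by
    intro i
    have := hkey i
    rw [hstz] at this
    simp at this
    have := this.resolve_left (ne_of_gt hα0)
    linarith
  ext i
  exact this i
end

section
/- Let n ≥ 1, q⋆ ∈ ℝⁿ, γ ≥ 0 and α₂ > n γ, and define φ : ℝⁿ → ℝⁿ by φ(q) = γ sin(qΣ − qΣ⋆)·𝟙ₙ + α₂(q − q⋆), where qΣ := Σᵢ qᵢ and qΣ⋆ := Σᵢ q⋆ᵢ. Then for every τ ∈ ℝⁿ there exists a unique q̄ ∈ ℝⁿ with φ(q̄) = τ; that is, φ is a bijection of ℝⁿ. -/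
/-- The scalar equation `c sin u + α u = T` has a unique solution when `0 ≤ c < α`. -/
lemma scalar_eq_existsUnique (c α T : ℝ) (hc : 0 ≤ c) (h : c < α) :
    ∃! u : ℝ, c * Real.sin u + α * u = T := by
  have hα : 0 < α := lt_of_le_of_lt hc h
  set g : ℝ → ℝ := fun u => c * Real.sin u + α * u with hg
  have hmono : StrictMono g := by
    intro u v huv
    have hs : |Real.sin v - Real.sin u| ≤ |v - u| := by
      rw [Real.sin_sub_sin, abs_mul, abs_mul, abs_two]
      have h1 : |Real.sin ((v - u) / 2)| ≤ |(v - u) / 2| := Real.abs_sin_le_abs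
      have h2 : |Real.cos ((v + u) / 2)| ≤ 1 := Real.abs_cos_le_one _
      have h3 : |(v - u) / 2| = |v - u| / 2 := by rw [abs_div]; norm_num
      nlinarith [abs_nonneg (Real.sin ((v - u) / 2)), abs_nonneg (v - u)]
    rw [abs_of_pos (sub_pos.mpr huv)] at hs
    have h1 := (abs_le.mp hs).1
    simp only [hg]
    nlinarith [mul_nonneg hc (sub_nonneg.mpr huv.le)]
  have hcont : Continuous g := by
    simp only [hg]; continuity
  have hab : (T - c) / α ≤ (T + c) / α := by
    gcongr
    linarith
  have hmem : T ∈ Set.Icc (g ((T - c) / α)) (g ((T + c) / α)) := by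
    constructor
    · have h1 : Real.sin ((T - c) / α) ≤ 1 := Real.sin_le_one _
      have h2 : c * Real.sin ((T - c) / α) ≤ c := by nlinarith
      simp only [hg]
      rw [mul_div_cancel₀ _ hα.ne'] at *
      linarith
    · have h1 : -1 ≤ Real.sin ((T + c) / α) := Real.neg_one_le_sin _
      have h2 : -c ≤ c * Real.sin ((T + c) / α) := by nlinarith
      simp only [hg]
      rw [mul_div_cancel₀ _ hα.ne'] at *
      linarith
  obtain ⟨u, _, hu⟩ := intermediate_value_Icc hab hcont.continuousOn hmem
  exact ⟨u, hu, fun v hv => hmono.injective (hv.trans hu.symm)⟩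

/-- For `γ ≥ 0` and `α₂ > nγ`, the map
`φ(q) = γ sin(qΣ − qΣ⋆)·𝟙ₙ + α₂(q − q⋆)` is a bijection of ℝⁿ: for every `τ ∈ ℝⁿ`
there is a unique `q̄` with `φ(q̄) = τ`. -/
theorem stmt_12 (n : ℕ) (hn : 1 ≤ n) (qs : EuclideanSpace ℝ (Fin n))
    (γ α₂ : ℝ) (hγ : 0 ≤ γ) (hα : (n : ℝ) * γ < α₂)
    (one : EuclideanSpace ℝ (Fin n)) (hone : one = WithLp.toLp 2 (fun _ => 1))
    (φ : EuclideanSpace ℝ (Fin n) → EuclideanSpace ℝ (Fin n))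
    (hφ : ∀ q : EuclideanSpace ℝ (Fin n),
      φ q = (γ * Real.sin ((∑ i, q i) - (∑ i, qs i))) • one + α₂ • (q - qs)) :
    ∀ τ : EuclideanSpace ℝ (Fin n), ∃! qbar : EuclideanSpace ℝ (Fin n), φ qbar = τ := by
  intro τ
  have hc : (0:ℝ) ≤ (n : ℝ) * γ := mul_nonneg (Nat.cast_nonneg n) hγ
  have hα2 : 0 < α₂ := lt_of_le_of_lt hc hα
  set T : ℝ := ∑ i, τ i with hT
  obtain ⟨u, hu, huniq⟩ := scalar_eq_existsUnique ((n:ℝ) * γ) α₂ T hc hα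
  -- the candidate solution
  set qbar : EuclideanSpace ℝ (Fin n) :=
    WithLp.toLp 2 (fun i => qs i + α₂⁻¹ * (τ i - γ * Real.sin u)) with hqbar
  -- the sum of qbar minus sum of qs equals u
  have hsum : (∑ i, qbar i) - (∑ i, qs i) = u := by
    simp only [hqbar, PiLp.toLp_apply]
    rw [Finset.sum_add_distrib, ← Finset.mul_sum, Finset.sum_sub_distrib]
    simp only [Finset.sum_const, Finset.card_univ, Fintype.card_fin, nsmul_eq_mul]
    have : T - (n:ℝ) * (γ * Real.sin u) = α₂ * u := by
      rw [hT]; ring_nf; ring_nf at hu; linarith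
    rw [← hT]
    field_simp
    linarith [this]
  -- a key pointwise characterization
  have key : ∀ q : EuclideanSpace ℝ (Fin n), φ q = τ ↔
      ((∑ i, q i) - (∑ i, qs i) = u ∧
       ∀ i, γ * Real.sin u + α₂ * (q i - qs i) = τ i) := by
    intro q
    set v : ℝ := (∑ i, q i) - (∑ i, qs i) with hv
    have happly : ∀ i, φ q i = γ * Real.sin v * one i + α₂ * (q i - qs i) := by
      intro i
      rw [hφ q]
      simp [PiLp.add_apply, PiLp.smul_apply, PiLp.sub_apply, smul_eq_mul, ← hv]
    constructor
    · intro hq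
      have hpt : ∀ i, γ * Real.sin v + α₂ * (q i - qs i) = τ i := by
        intro i
        have hqi : φ q i = τ i := by rw [hq]
        rw [happly i, hone] at hqi
        simpa using hqi
      -- sum over i gives the scalar equation for v
      have hsv : (n:ℝ) * γ * Real.sin v + α₂ * v = T := by
        have this : ∑ i, (γ * Real.sin v + α₂ * (q i - qs i)) = ∑ i, τ i :=
          Finset.sum_congr rfl (fun i _ => hpt i)
        rw [Finset.sum_add_distrib, Finset.sum_const, Finset.card_univ,
          Fintype.card_fin, nsmul_eq_mul, ← Finset.mul_sum, Finset.sum_sub_distrib] at this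
        rw [hv]
        linarith [this]
      have hvu : v = u := huniq v hsv
      exact ⟨hvu, fun i => by rw [← hvu]; exact hpt i⟩
    · rintro ⟨hvu, hpt⟩
      ext i
      rw [happly i, hone]
      simp only [PiLp.toLp_apply]
      rw [hvu, mul_one]
      exact hpt i
  refine ⟨qbar, (key qbar).mpr ⟨hsum, fun i => ?_⟩, ?_⟩
  · simp only [hqbar, PiLp.toLp_apply]
    field_simp
    ring
  · intro q hq
    obtain ⟨_, hpt⟩ := (key q).mp hq
    ext i
    have := hpt i
    simp only [hqbar, PiLp.toLp_apply]
    field_simp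
    linarith [this]
end

section
/- Let n ≥ 1, ℓ > 0, θ, γ, α₂ ∈ ℝ, and define F_x, F_y : ℝ → ℝ by F_x(f) = ℓ sin(nθ + (γ + α₂)ℓ f) + ℓ·Σ_{k=1}^{n−1} sin(kθ + γℓ f) and F_y(f) = ℓ cos(nθ + (γ + α₂)ℓ f) + ℓ·Σ_{k=1}^{n−1} cos(kθ + γℓ f). Then the limit as f → 0 (f ≠ 0) of √((F_x(f) − F_x(0))² + (F_y(f) − F_y(0))²)/|f| exists and equals ℓ²·√((γ·Σ_{k=1}^{n} cos(kθ) + α₂ cos(nθ))² + (γ·Σ_{k=1}^{n} sin(kθ) + α₂ sin(nθ))²). -/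
lemma hd_sin (c a : ℝ) : HasDerivAt (fun f => Real.sin (c + a * f)) (a * Real.cos c) 0 := by
  have h : HasDerivAt (fun f : ℝ => c + a * f) a 0 := by
    simpa using ((hasDerivAt_id (0:ℝ)).const_mul a).const_add c
  simpa [mul_comm, Function.comp_def] using (Real.hasDerivAt_sin (c + a * 0)).comp 0 h

lemma hd_cos (c a : ℝ) : HasDerivAt (fun f => Real.cos (c + a * f)) (-(a * Real.sin c)) 0 := by
  have h : HasDerivAt (fun f : ℝ => c + a * f) a 0 := by
    simpa using ((hasDerivAt_id (0:ℝ)).const_mul a).const_add c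
  simpa [mul_comm, Function.comp_def] using (Real.hasDerivAt_cos (c + a * 0)).comp 0 h

/-- Closed-form transverse stiffness limit at the end-effector: the
displacement-to-force ratio `√((Fx(f)−Fx(0))² + (Fy(f)−Fy(0))²)/|f|` tends, as
`f → 0`, `f ≠ 0`, to
`ℓ²√((γΣ_{k=1}^n cos kθ + α₂ cos nθ)² + (γΣ_{k=1}^n sin kθ + α₂ sin nθ)²)`. -/
theorem stmt_16 (n : ℕ) (hn : 1 ≤ n) (ℓ θ γ α₂ : ℝ) (hℓ : 0 < ℓ)
    (Fx Fy : ℝ → ℝ)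
    (hFx : ∀ f, Fx f = ℓ * Real.sin ((n : ℝ) * θ + (γ + α₂) * ℓ * f) +
      ℓ * ∑ k ∈ Finset.Icc 1 (n - 1), Real.sin ((k : ℝ) * θ + γ * ℓ * f))
    (hFy : ∀ f, Fy f = ℓ * Real.cos ((n : ℝ) * θ + (γ + α₂) * ℓ * f) +
      ℓ * ∑ k ∈ Finset.Icc 1 (n - 1), Real.cos ((k : ℝ) * θ + γ * ℓ * f)) :
    Filter.Tendsto
      (fun f : ℝ => Real.sqrt ((Fx f - Fx 0) ^ 2 + (Fy f - Fy 0) ^ 2) / |f|)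
      (nhdsWithin 0 {(0 : ℝ)}ᶜ)
      (nhds (ℓ ^ 2 * Real.sqrt
        ((γ * ∑ k ∈ Finset.Icc 1 n, Real.cos ((k : ℝ) * θ) + α₂ * Real.cos ((n : ℝ) * θ)) ^ 2 +
         (γ * ∑ k ∈ Finset.Icc 1 n, Real.sin ((k : ℝ) * θ) + α₂ * Real.sin ((n : ℝ) * θ)) ^ 2))) := by
  set X : ℝ := γ * ∑ k ∈ Finset.Icc 1 n, Real.cos ((k : ℝ) * θ) + α₂ * Real.cos ((n : ℝ) * θ) with hX
  set Y : ℝ := γ * ∑ k ∈ Finset.Icc 1 n, Real.sin ((k : ℝ) * θ) + α₂ * Real.sin ((n : ℝ) * θ) with hY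
  -- split the sums
  have hsplit : ∀ g : ℕ → ℝ, ∑ k ∈ Finset.Icc 1 n, g k
      = (∑ k ∈ Finset.Icc 1 (n - 1), g k) + g n := by
    intro g
    have : n = (n - 1) + 1 := (Nat.succ_pred_eq_of_pos hn).symm
    rw [this, Finset.sum_Icc_succ_top (by omega)]
    rw [← this]
  -- derivatives
  have hdx : HasDerivAt Fx (ℓ ^ 2 * X) 0 := by
    have h1 : HasDerivAt (fun f => ℓ * Real.sin ((n : ℝ) * θ + (γ + α₂) * ℓ * f))
        (ℓ * ((γ + α₂) * ℓ * Real.cos ((n : ℝ) * θ))) 0 :=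
      (hd_sin ((n : ℝ) * θ) ((γ + α₂) * ℓ)).const_mul ℓ
    have h2 : HasDerivAt (fun f => ℓ * ∑ k ∈ Finset.Icc 1 (n - 1),
        Real.sin ((k : ℝ) * θ + γ * ℓ * f))
        (ℓ * (γ * ℓ * ∑ k ∈ Finset.Icc 1 (n - 1), Real.cos ((k : ℝ) * θ))) 0 := by
      refine HasDerivAt.const_mul ℓ ?_
      rw [Finset.mul_sum]
      exact HasDerivAt.fun_sum fun k _ => hd_sin ((k : ℝ) * θ) (γ * ℓ)
    have h := h1.fun_add h2
    have heq : (fun f => ℓ * Real.sin ((n : ℝ) * θ + (γ + α₂) * ℓ * f) +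
        ℓ * ∑ k ∈ Finset.Icc 1 (n - 1), Real.sin ((k : ℝ) * θ + γ * ℓ * f)) = Fx := by
      funext f; rw [hFx f]
    rw [heq] at h
    refine h.congr_deriv ?_
    rw [hX, hsplit (fun k => Real.cos ((k : ℝ) * θ))]
    ring
  have hdy : HasDerivAt Fy (-(ℓ ^ 2 * Y)) 0 := by
    have h1 : HasDerivAt (fun f => ℓ * Real.cos ((n : ℝ) * θ + (γ + α₂) * ℓ * f))
        (ℓ * (-((γ + α₂) * ℓ * Real.sin ((n : ℝ) * θ)))) 0 :=
      (hd_cos ((n : ℝ) * θ) ((γ + α₂) * ℓ)).const_mul ℓ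
    have h2 : HasDerivAt (fun f => ℓ * ∑ k ∈ Finset.Icc 1 (n - 1),
        Real.cos ((k : ℝ) * θ + γ * ℓ * f))
        (ℓ * -(γ * ℓ * ∑ k ∈ Finset.Icc 1 (n - 1), Real.sin ((k : ℝ) * θ))) 0 := by
      refine HasDerivAt.const_mul ℓ ?_
      have := HasDerivAt.fun_sum (u := Finset.Icc 1 (n-1))
        fun k _ => hd_cos ((k : ℝ) * θ) (γ * ℓ)
      simpa [Finset.mul_sum] using this
    have h := h1.fun_add h2
    have heq : (fun f => ℓ * Real.cos ((n : ℝ) * θ + (γ + α₂) * ℓ * f) +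
        ℓ * ∑ k ∈ Finset.Icc 1 (n - 1), Real.cos ((k : ℝ) * θ + γ * ℓ * f)) = Fy := by
      funext f; rw [hFy f]
    rw [heq] at h
    refine h.congr_deriv ?_
    rw [hY, hsplit (fun k => Real.sin ((k : ℝ) * θ))]
    ring
  -- slopes tend to derivatives
  have hsx : Filter.Tendsto (fun f : ℝ => (Fx f - Fx 0) / f) (nhdsWithin 0 {(0:ℝ)}ᶜ)
      (nhds (ℓ ^ 2 * X)) := by
    refine (hasDerivAt_iff_tendsto_slope.mp hdx).congr fun f => ?_
    simp [slope_def_field]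
  have hsy : Filter.Tendsto (fun f : ℝ => (Fy f - Fy 0) / f) (nhdsWithin 0 {(0:ℝ)}ᶜ)
      (nhds (-(ℓ ^ 2 * Y))) := by
    refine (hasDerivAt_iff_tendsto_slope.mp hdy).congr fun f => ?_
    simp [slope_def_field]
  have hcomb : Filter.Tendsto
      (fun f : ℝ => Real.sqrt (((Fx f - Fx 0) / f) ^ 2 + ((Fy f - Fy 0) / f) ^ 2))
      (nhdsWithin 0 {(0:ℝ)}ᶜ)
      (nhds (Real.sqrt ((ℓ ^ 2 * X) ^ 2 + (-(ℓ ^ 2 * Y)) ^ 2))) :=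
    ((hsx.pow 2).add (hsy.pow 2)).sqrt
  have hval : Real.sqrt ((ℓ ^ 2 * X) ^ 2 + (-(ℓ ^ 2 * Y)) ^ 2)
      = ℓ ^ 2 * Real.sqrt (X ^ 2 + Y ^ 2) := by
    have h2 : (ℓ ^ 2 * X) ^ 2 + (-(ℓ ^ 2 * Y)) ^ 2 = (ℓ ^ 2) ^ 2 * (X ^ 2 + Y ^ 2) := by ring
    rw [h2, Real.sqrt_mul (by positivity), Real.sqrt_sq (by positivity)]
  rw [← hval]
  refine hcomb.congr' ?_
  filter_upwards [self_mem_nhdsWithin] with f hf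
  have hf0 : f ≠ 0 := hf
  rw [div_pow, div_pow, ← add_div, Real.sqrt_div (by positivity), Real.sqrt_sq_eq_abs]
end
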